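/- Let F be a {0,1}-valued random variable and U a random variable taking finitely many values on a probability space with measure π. For each value u with π(U = u) > 0, define Z(u) := |2·π(F = 0 | U = u) − 1|. Let α ∈ [0,1] and let W be the event {Z(U) ≥ α}, and assume π(W) > 0. Then E[ Z(U) | W ] ≥ |2·π(F = 0) − 1|. -/

import Mathlib

open MeasureTheory ProbabilityTheory

/-- **The conditional advantage, conditioned on being large, dominates the advantage.**
Let `F` be a `Bool`-valued random variable (with `false` playing the role of `0`) and `U` a
random variable taking finitely many values.  For each `u` of positive probability let
`Z u = |2·π(F = 0 ∣ U = u) − 1|` be the conditional advantage.  If `W = {Z(U) ≥ α}` has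
positive probability (for `α ∈ [0,1]`), then `E[Z(U) ∣ W] ≥ |2·π(F = 0) − 1|`. -/
theorem stmt8 {Ω S : Type*} [MeasurableSpace Ω] [Fintype S]
    (π : Measure Ω) [IsProbabilityMeasure π]
    (F : Ω → Bool) (U : Ω → S)
    (hF : MeasurableSet {ω | F ω = false}) (hU : ∀ u, MeasurableSet {ω | U ω = u})
    (Z : S → ℝ)
    (hZ : ∀ u : S, π {ω | U ω = u} ≠ 0 →
      Z u = |2 * ((π ({ω | F ω = false} ∩ {ω | U ω = u})).toReal /
        (π {ω | U ω = u}).toReal) - 1|)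
    (α : ℝ) (hα : α ∈ Set.Icc (0 : ℝ) 1)
    (hW : π {ω | α ≤ Z (U ω)} ≠ 0) :
    |2 * (π {ω | F ω = false}).toReal - 1| ≤
      (∫ ω in {ω | α ≤ Z (U ω)}, Z (U ω) ∂π) / (π {ω | α ≤ Z (U ω)}).toReal := by
  classical
  obtain ⟨hα0, hα1⟩ := hα
  set W : Set Ω := {ω | α ≤ Z (U ω)} with hWdef
  set T : Finset S := Finset.univ.filter (fun u => α ≤ Z u) with hT
  have hWeq : W = ⋃ u ∈ T, {ω | U ω = u} := by
    ext ω
    simp only [hWdef, Set.mem_setOf_eq, Set.mem_iUnion, hT, Finset.mem_filter,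
      Finset.mem_univ, true_and]
    constructor
    · intro h; exact ⟨U ω, h, rfl⟩
    · rintro ⟨u, h, rfl⟩; exact h
  set p : S → ℝ := fun u => (π {ω | U ω = u}).toReal with hp
  set q : S → ℝ := fun u => (π ({ω | F ω = false} ∩ {ω | U ω = u})).toReal with hq
  have hp0 : ∀ u, 0 ≤ p u := fun u => ENNReal.toReal_nonneg
  have hfin : ∀ s : Set Ω, π s ≠ ⊤ := fun s => measure_ne_top π s
  have hdisj : ∀ u v : S, u ≠ v → Disjoint {ω | U ω = u} {ω | U ω = v} := by
    intro u v huv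
    refine Set.disjoint_left.2 fun ω h1 h2 => ?_
    exact huv (h1.symm.trans h2)
  -- sum of p over any finset equals toReal of measure of the union
  have hsum_union : ∀ (s : Finset S),
      π (⋃ u ∈ s, {ω | U ω = u}) = ∑ u ∈ s, π {ω | U ω = u} := by
    intro s
    refine measure_biUnion_finset ?_ (fun u _ => hU u)
    intro u hu v hv huv
    exact hdisj u v huv
  have hpsum : ∑ u, p u = 1 := by
    have h1 : (⋃ u ∈ (Finset.univ : Finset S), {ω | U ω = u}) = Set.univ := by
      ext ω; simp
    have := hsum_union Finset.univ
    rw [h1, measure_univ] at this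
    have := congrArg ENNReal.toReal this
    rw [ENNReal.toReal_sum (fun u _ => hfin _)] at this
    simpa [hp] using this.symm
  have hqsum : ∑ u, q u = (π {ω | F ω = false}).toReal := by
    have h1 : π (⋃ u ∈ (Finset.univ : Finset S), ({ω | F ω = false} ∩ {ω | U ω = u}))
        = ∑ u, π ({ω | F ω = false} ∩ {ω | U ω = u}) := by
      refine measure_biUnion_finset ?_ (fun u _ => hF.inter (hU u))
      intro u hu v hv huv
      exact Set.disjoint_of_subset Set.inter_subset_right Set.inter_subset_right
        (hdisj u v huv)
    have h2 : (⋃ u ∈ (Finset.univ : Finset S), ({ω | F ω = false} ∩ {ω | U ω = u}))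
        = {ω | F ω = false} := by
      ext ω; simp
    rw [h2] at h1
    have := congrArg ENNReal.toReal h1
    rw [ENNReal.toReal_sum (fun u _ => hfin _)] at this
    simpa [hq] using this.symm
  have hkey : ∀ u, |2 * q u - p u| ≤ p u * Z u := by
    intro u
    by_cases h : π {ω | U ω = u} = 0
    · have hpu : p u = 0 := by simp [hp, h]
      have hqu : q u = 0 := by
        have : π ({ω | F ω = false} ∩ {ω | U ω = u}) = 0 :=
          le_antisymm (h ▸ measure_mono Set.inter_subset_right) zero_le
        simp [hq, this]
      simp [hpu, hqu]
    · have hpu : 0 < p u := ENNReal.toReal_pos h (hfin _)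
      rw [hZ u h]
      have habs : |p u| * |2 * (q u / p u) - 1| = |2 * q u - p u| := by
        rw [← abs_mul]
        congr 1
        field_simp
      rw [abs_of_pos hpu] at habs
      rw [← habs]
  -- the integral over W
  have hint : ∀ u : S, IntegrableOn (fun ω => Z (U ω)) {ω | U ω = u} π := by
    intro u
    have hc : IntegrableOn (fun _ : Ω => Z u) {ω | U ω = u} π :=
      MeasureTheory.integrableOn_const (measure_lt_top π _).ne
    exact hc.congr_fun (fun ω hω => by
      simp only [Set.mem_setOf_eq] at hω; rw [hω]) (hU u)
  have hIeq : (∫ ω in W, Z (U ω) ∂π) = ∑ u ∈ T, Z u * p u := by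
    rw [hWeq]
    rw [MeasureTheory.integral_biUnion_finset T (fun u _ => hU u)
      (fun u hu v hv huv => hdisj u v huv)
      (fun u _ => hint u)]
    refine Finset.sum_congr rfl fun u _ => ?_
    rw [MeasureTheory.setIntegral_congr_fun (hU u)
      (g := fun _ => Z u) (fun ω hω => by simp only [Set.mem_setOf_eq] at hω; rw [hω])]
    rw [MeasureTheory.setIntegral_const]
    simp [hp, mul_comm, Measure.real]
  have hpW : (π W).toReal = ∑ u ∈ T, p u := by
    rw [hWeq, hsum_union T, ENNReal.toReal_sum (fun u _ => hfin _)]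
  have hpWpos : 0 < (π W).toReal := ENNReal.toReal_pos hW (hfin _)
  have hpWle1 : (π W).toReal ≤ 1 := by
    calc (π W).toReal ≤ (π Set.univ).toReal :=
      ENNReal.toReal_mono (hfin _) (measure_mono (μ := π) (Set.subset_univ W))
    _ = 1 := by simp
  -- advantage bound: |2c - 1| ≤ ∑ p u * Z u
  have hA : |2 * (π {ω | F ω = false}).toReal - 1| ≤ ∑ u, p u * Z u := by
    have h1 : 2 * (π {ω | F ω = false}).toReal - 1 = ∑ u, (2 * q u - p u) := by
      rw [Finset.sum_sub_distrib, ← Finset.mul_sum, hqsum, hpsum]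
    rw [h1]
    calc |∑ u, (2 * q u - p u)| ≤ ∑ u, |2 * q u - p u| := Finset.abs_sum_le_sum_abs _ _
    _ ≤ ∑ u, p u * Z u := Finset.sum_le_sum fun u _ => hkey u
  -- split sum
  have hsplit : ∑ u, p u * Z u = (∑ u ∈ T, p u * Z u) + ∑ u ∈ Tᶜ, p u * Z u := by
    rw [← Finset.sum_add_sum_compl T]
  have hpsplit : (∑ u ∈ T, p u) + ∑ u ∈ Tᶜ, p u = 1 := by
    rw [Finset.sum_add_sum_compl, hpsum]
  set I : ℝ := ∑ u ∈ T, Z u * p u with hI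
  have hIα : α * (∑ u ∈ T, p u) ≤ I := by
    rw [hI, Finset.mul_sum]
    refine Finset.sum_le_sum fun u hu => ?_
    have : α ≤ Z u := (Finset.mem_filter.1 hu).2
    exact mul_le_mul_of_nonneg_right this (hp0 u)
  have hJ : ∑ u ∈ Tᶜ, p u * Z u ≤ α * ∑ u ∈ Tᶜ, p u := by
    rw [Finset.mul_sum]
    refine Finset.sum_le_sum fun u hu => ?_
    have hZu : Z u ≤ α := by
      have := Finset.mem_compl.1 hu
      simp only [hT, Finset.mem_filter, Finset.mem_univ, true_and, not_le] at this
      exact this.le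
    calc p u * Z u ≤ p u * α := mul_le_mul_of_nonneg_left hZu (hp0 u)
    _ = α * p u := mul_comm _ _
  have hTI : (∑ u ∈ T, p u * Z u) = I := by
    rw [hI]; exact Finset.sum_congr rfl fun u _ => mul_comm _ _
  rw [hIeq, le_div_iff₀ hpWpos, hpW]
  set s : ℝ := ∑ u ∈ T, p u with hs
  have hs1 : s ≤ 1 := by
    have : s + ∑ u ∈ Tᶜ, p u = 1 := hpsplit
    have h2 : 0 ≤ ∑ u ∈ Tᶜ, p u := Finset.sum_nonneg fun u _ => hp0 u
    linarith
  have hspos : 0 < s := by rw [← hpW]; exact hpWpos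
  have hAle : |2 * (π {ω | F ω = false}).toReal - 1| ≤ I + α * (1 - s) := by
    calc |2 * (π {ω | F ω = false}).toReal - 1| ≤ ∑ u, p u * Z u := hA
    _ = (∑ u ∈ T, p u * Z u) + ∑ u ∈ Tᶜ, p u * Z u := hsplit
    _ ≤ I + α * ∑ u ∈ Tᶜ, p u := by rw [hTI]; linarith [hJ]
    _ = I + α * (1 - s) := by
        congr 1
        have : (∑ u ∈ Tᶜ, p u) = 1 - s := by rw [hs]; linarith [hpsplit]
        rw [this]
  nlinarith [mul_nonneg (sub_nonneg.2 hIα) (sub_nonneg.2 hs1),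
    abs_nonneg (2 * (π {ω | F ω = false}).toReal - 1)]
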